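/- (Regret as weighted Bregman divergences) Assume X₁, X₂, … are i.i.d. from an exponential family f_θ(x) = exp(θᵀφ(x) − Φ(θ)), and the online mirror descent with step sizes η_i = 1/i produces dual iterates μ̂_i satisfying μ̂_i = μ̂_{i−1} − (1/i)(μ̂_{i−1} − φ(X_i)) with primal iterates θ̂_i = ∇Φ*(μ̂_i) (no projection, so θ̂_i = θ̃_i). Then the regret R_t = ∑_{i=1}^t(−log f_{θ̂_{i−1}}(X_i)) − inf_{θ̃} ∑_{i=1}^t(−log f_{θ̃}(X_i)) satisfies R_t = ∑_{i=1}^t i · B_{Φ*}(μ̂_i, μ̂_{i−1}), where Φ* is the Legendre-Fenchel conjugate of Φ and B_{Φ*} its Bregman divergence. -/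
import Mathlib


open MeasureTheory Real
open scoped RealInnerProductSpace

theorem stmt_11 {d : ℕ} {S : Type*}
    (φ : S → EuclideanSpace ℝ (Fin d))
    (Φ Φs : EuclideanSpace ℝ (Fin d) → ℝ)
    (gradΦ gradΦs : EuclideanSpace ℝ (Fin d) → EuclideanSpace ℝ (Fin d))
    (f : EuclideanSpace ℝ (Fin d) → S → ℝ)
    (hf : ∀ θ s, f θ s = Real.exp (⟪θ, φ s⟫ - Φ θ))
    (hFY : ∀ z u, ⟪u, z⟫ - Φ u ≤ Φs z)
    (hconj : ∀ θ, Φs (gradΦ θ) = ⟪θ, gradΦ θ⟫ - Φ θ)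
    (hgs : ∀ θ, gradΦs (gradΦ θ) = θ)
    (hsg : ∀ z, gradΦ (gradΦs z) = z)
    (x : ℕ → S) (θ₀ : EuclideanSpace ℝ (Fin d))
    (μhat : ℕ → EuclideanSpace ℝ (Fin d))
    (hμ0 : μhat 0 = gradΦ θ₀)
    (hμ : ∀ i, 1 ≤ i → μhat i = μhat (i - 1) - ((i : ℝ)⁻¹) • (μhat (i - 1) - φ (x i)))
    (θhat : ℕ → EuclideanSpace ℝ (Fin d))
    (hθ : ∀ i, θhat i = gradΦs (μhat i))
    (B : EuclideanSpace ℝ (Fin d) → EuclideanSpace ℝ (Fin d) → ℝ)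
    (hB : ∀ u v, B u v = Φs u - Φs v - ⟪gradΦs v, u - v⟫)
    (R : ℕ → ℝ)
    (hR : ∀ t, R t = (∑ i ∈ Finset.Icc 1 t, -Real.log (f (θhat (i - 1)) (x i))) -
        ⨅ ϑ : EuclideanSpace ℝ (Fin d), ∑ i ∈ Finset.Icc 1 t, -Real.log (f ϑ (x i))) :
    ∀ t, R t = ∑ i ∈ Finset.Icc 1 t, (i : ℝ) * B (μhat i) (μhat (i - 1)) := by
  -- μhat t is the running average: t • μhat t = ∑ φ (x i)
  have hsum : ∀ t : ℕ, (t : ℝ) • μhat t = ∑ i ∈ Finset.Icc 1 t, φ (x i) := by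
    intro t
    induction t with
    | zero => simp
    | succ n ih =>
      rw [Finset.sum_Icc_succ_top (by omega : 1 ≤ n + 1), ← ih]
      have h := hμ (n + 1) (by omega)
      simp only [Nat.add_sub_cancel] at h
      rw [h]
      have hne : ((n : ℝ) + 1) ≠ 0 := by positivity
      push_cast
      rw [smul_sub, smul_smul, mul_inv_cancel₀ hne, one_smul, add_smul, one_smul]
      abel
  -- negative log-likelihood of one observation
  have hlog : ∀ (ϑ : EuclideanSpace ℝ (Fin d)) (i : ℕ),
      -Real.log (f ϑ (x i)) = Φ ϑ - ⟪ϑ, φ (x i)⟫ := by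
    intro ϑ i
    rw [hf, Real.log_exp]; ring
  -- the t-sample negative log-likelihood
  have hS : ∀ (t : ℕ) (ϑ : EuclideanSpace ℝ (Fin d)),
      ∑ i ∈ Finset.Icc 1 t, -Real.log (f ϑ (x i)) = (t : ℝ) * Φ ϑ - (t : ℝ) * ⟪ϑ, μhat t⟫ := by
    intro t ϑ
    have : ∑ i ∈ Finset.Icc 1 t, -Real.log (f ϑ (x i))
        = ∑ i ∈ Finset.Icc 1 t, (Φ ϑ - ⟪ϑ, φ (x i)⟫) := by
      exact Finset.sum_congr rfl fun i _ => hlog ϑ i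
    rw [this, Finset.sum_sub_distrib, Finset.sum_const, Nat.card_Icc, ← inner_sum, ← hsum,
      real_inner_smul_right]
    simp [nsmul_eq_mul]
  -- Φs at μhat t via conjugacy
  have hΦs : ∀ z : EuclideanSpace ℝ (Fin d), Φs z = ⟪gradΦs z, z⟫ - Φ (gradΦs z) := by
    intro z
    have := hconj (gradΦs z)
    rwa [hsg] at this
  -- the infimum of the t-sample negative log-likelihood
  have hinf : ∀ t : ℕ,
      (⨅ ϑ : EuclideanSpace ℝ (Fin d), ∑ i ∈ Finset.Icc 1 t, -Real.log (f ϑ (x i)))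
        = -(t : ℝ) * Φs (μhat t) := by
    intro t
    have hlb : ∀ ϑ : EuclideanSpace ℝ (Fin d),
        -(t : ℝ) * Φs (μhat t) ≤ ∑ i ∈ Finset.Icc 1 t, -Real.log (f ϑ (x i)) := by
      intro ϑ
      rw [hS]
      have h1 := hFY (μhat t) ϑ
      have h2 : (0:ℝ) ≤ (t : ℝ) := Nat.cast_nonneg t
      nlinarith [mul_le_mul_of_nonneg_left h1 h2]
    apply le_antisymm
    · have := ciInf_le ⟨-(t : ℝ) * Φs (μhat t), fun y ⟨ϑ, hϑ⟩ => hϑ ▸ hlb ϑ⟩ (gradΦs (μhat t))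
      refine this.trans_eq ?_
      rw [hS, hΦs (μhat t)]
      ring
    · exact le_ciInf hlb
  -- per-step identity and telescoping, by induction
  have hterm : ∀ i : ℕ, 1 ≤ i →
      -Real.log (f (θhat (i - 1)) (x i))
        = (i : ℝ) * B (μhat i) (μhat (i - 1)) + ((i : ℝ) - 1) * Φs (μhat (i - 1))
          - (i : ℝ) * Φs (μhat i) := by
    intro i hi
    have hne : (i : ℝ) ≠ 0 := by positivity
    have hd : μhat i - μhat (i - 1) = -((i : ℝ)⁻¹) • (μhat (i - 1) - φ (x i)) := by
      rw [hμ i hi]; module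
    rw [hlog, hB, hθ, hd, inner_smul_right, hΦs (μhat (i - 1)), inner_sub_right]
    field_simp
    ring
  have key : ∀ t : ℕ,
      ∑ i ∈ Finset.Icc 1 t, -Real.log (f (θhat (i - 1)) (x i))
        = (∑ i ∈ Finset.Icc 1 t, (i : ℝ) * B (μhat i) (μhat (i - 1)))
          - (t : ℝ) * Φs (μhat t) := by
    intro t
    induction t with
    | zero => simp
    | succ n ih =>
      rw [Finset.sum_Icc_succ_top (by omega : 1 ≤ n + 1),
        Finset.sum_Icc_succ_top (by omega : 1 ≤ n + 1), ih, hterm (n + 1) (by omega)]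
      simp only [Nat.add_sub_cancel]
      push_cast
      ring
  intro t
  rw [hR, hinf, key]
  ring
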